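/- arXiv:2412.03997 — 3 statements merged into one kernel-verified Lean document; each statement's English description precedes it below -/
import Mathlib

section
/- Let ψ, g : [0,∞) → [0,∞) with ψ ∈ C^2, g ∈ C^1, ψ'(0) = 0, and ψ''(r) + g'(r) ≥ 0 for all r ≥ 0. Suppose there exists x_0 > 0 with ψ(x_0) < ψ(0), and let f = e^ψ. Then there exists v_0 > 0 such that for every v ∈ (0, v_0), the interval J_1 with left endpoint x_0 and weighted length ∫_{J_1} f dx = v satisfies E(J_1) < E(J_0), where J_0 is the centered symmetric interval with weighted length v and E(I) = f(inf I) + f(sup I) + ∫_I g(|x|) f(|x|) dx. -/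
open MeasureTheory Set intervalIntegral

/-- If `ψ` does not attain its minimum at the origin, then for small volumes the interval with
left endpoint `x₀` has strictly smaller energy than the centered symmetric interval of the same
weighted volume. -/
theorem off_center_interval_beats_centered
    (ψ g : ℝ → ℝ) (hψ : ContDiff ℝ 2 ψ) (hg : ContDiff ℝ 1 g)
    (hψ0 : ∀ r : ℝ, 0 ≤ r → 0 ≤ ψ r) (hg0 : ∀ r : ℝ, 0 ≤ r → 0 ≤ g r)
    (hψ' : deriv ψ 0 = 0)
    (hadm : ∀ r : ℝ, 0 ≤ r → 0 ≤ deriv (deriv ψ) r + deriv g r)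
    (x₀ : ℝ) (hx₀ : 0 < x₀) (hmin : ψ x₀ < ψ 0)
    (E : ℝ → ℝ → ℝ)
    (hE : ∀ a b : ℝ, E a b =
      Real.exp (ψ |a|) + Real.exp (ψ |b|) + ∫ x in a..b, g |x| * Real.exp (ψ |x|)) :
    ∃ v₀ > 0, ∀ v ∈ Ioo (0:ℝ) v₀, ∀ b c : ℝ,
      x₀ < b → (∫ x in x₀..b, Real.exp (ψ |x|)) = v →
      0 < c → (∫ x in (-c)..c, Real.exp (ψ |x|)) = v →
      E x₀ b < E (-c) c := by
  have hψc : Continuous ψ := hψ.continuous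
  have hgc : Continuous g := hg.continuous
  set f : ℝ → ℝ := fun x => Real.exp (ψ |x|) with hf
  have hfc : Continuous f := Real.continuous_exp.comp (hψc.comp continuous_abs)
  have hf1 : ∀ x, 1 ≤ f x := fun x => Real.one_le_exp (hψ0 |x| (abs_nonneg x))
  set h : ℝ → ℝ := fun x => g |x| * f x with hh
  have hhc : Continuous h := (hgc.comp continuous_abs).mul hfc
  have hhnn : ∀ x, 0 ≤ h x :=
    fun x => mul_nonneg (hg0 _ (abs_nonneg x)) (Real.exp_pos _).le
  obtain ⟨xM, hxMmem, hMmax⟩ :=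
    (isCompact_Icc : IsCompact (Icc x₀ (x₀ + 1))).exists_isMaxOn
      ⟨x₀, by constructor <;> linarith⟩ hhc.continuousOn
  have hM : ∀ y ∈ Icc x₀ (x₀ + 1), h y ≤ h xM := isMaxOn_iff.1 hMmax
  set M : ℝ := max (h xM) 1 with hMdef
  have hM1 : (1 : ℝ) ≤ M := le_max_right _ _
  have hMpos : (0 : ℝ) < M := lt_of_lt_of_le one_pos hM1
  have hlt : Real.exp (ψ x₀) < Real.exp (ψ 0) := Real.exp_lt_exp.2 hmin
  set ε : ℝ := (Real.exp (ψ 0) - Real.exp (ψ x₀)) / 6 with hε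
  have hεpos : 0 < ε := by
    have := sub_pos.2 hlt
    positivity
  have hF : Continuous fun x => Real.exp (ψ x) := Real.continuous_exp.comp hψc
  obtain ⟨δ₁, hδ₁pos, hδ₁⟩ := Metric.continuousAt_iff.1 (hF.continuousAt (x := x₀)) ε hεpos
  obtain ⟨δ₂, hδ₂pos, hδ₂⟩ := Metric.continuousAt_iff.1 (hF.continuousAt (x := 0)) ε hεpos
  refine ⟨min 1 (min δ₁ (min δ₂ (ε / M))), by positivity, ?_⟩
  rintro v ⟨hv0, hvlt⟩ b c hb hbv hc hcv
  have hv1 : v < 1 := lt_of_lt_of_le hvlt (min_le_left _ _)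
  have hvδ₁ : v < δ₁ :=
    lt_of_lt_of_le hvlt (le_trans (min_le_right _ _) (min_le_left _ _))
  have hvδ₂ : v < δ₂ :=
    lt_of_lt_of_le hvlt (le_trans (min_le_right _ _)
      (le_trans (min_le_right _ _) (min_le_left _ _)))
  have hvM : v < ε / M :=
    lt_of_lt_of_le hvlt (le_trans (min_le_right _ _)
      (le_trans (min_le_right _ _) (min_le_right _ _)))
  -- volume controls endpoints
  have hb1 : b - x₀ ≤ v := by
    have h1 : (∫ x in x₀..b, (1 : ℝ)) ≤ ∫ x in x₀..b, f x :=
      intervalIntegral.integral_mono_on hb.le intervalIntegrable_const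
        (hfc.intervalIntegrable _ _) (fun x _ => hf1 x)
    rw [hbv] at h1
    simpa using h1
  have hc1 : 2 * c ≤ v := by
    have h1 : (∫ x in (-c)..c, (1 : ℝ)) ≤ ∫ x in (-c)..c, f x :=
      intervalIntegral.integral_mono_on (by linarith) intervalIntegrable_const
        (hfc.intervalIntegrable _ _) (fun x _ => hf1 x)
    rw [hcv] at h1
    simp only [intervalIntegral.integral_const, smul_eq_mul, mul_one] at h1
    linarith
  have habsb : |b| = b := abs_of_pos (hx₀.trans hb)
  have habsc : |c| = c := abs_of_pos hc
  have habsnc : |(-c)| = c := by rw [abs_neg, habsc]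
  -- the centered integral is nonnegative
  have hIc : 0 ≤ ∫ x in (-c)..c, g |x| * Real.exp (ψ |x|) :=
    intervalIntegral.integral_nonneg (by linarith) (fun x _ => hhnn x)
  -- exp (ψ c) is close to exp (ψ 0)
  have hcδ : dist c 0 < δ₂ := by
    rw [Real.dist_eq, sub_zero, habsc]; linarith
  have hce : Real.exp (ψ 0) - ε < Real.exp (ψ c) := by
    have := hδ₂ hcδ
    rw [Real.dist_eq] at this
    have := abs_sub_lt_iff.1 this
    linarith [this.2]
  -- exp (ψ b) is close to exp (ψ x₀)
  have hbδ : dist b x₀ < δ₁ := by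
    rw [Real.dist_eq, abs_of_pos (by linarith : (0:ℝ) < b - x₀)]; linarith
  have hbe : Real.exp (ψ b) < Real.exp (ψ x₀) + ε := by
    have := hδ₁ hbδ
    rw [Real.dist_eq] at this
    have := abs_sub_lt_iff.1 this
    linarith [this.1]
  -- bound on the off-center integral
  have hIb : (∫ x in x₀..b, g |x| * Real.exp (ψ |x|)) < ε := by
    have h1 : (∫ x in x₀..b, g |x| * Real.exp (ψ |x|)) ≤ ∫ x in x₀..b, M := by
      apply intervalIntegral.integral_mono_on hb.le
        (hhc.intervalIntegrable _ _) intervalIntegrable_const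
      intro x hx
      have hxmem : x ∈ Icc x₀ (x₀ + 1) := ⟨hx.1, by linarith [hx.2, hb1]⟩
      exact le_trans (hM x hxmem) (le_max_left _ _)
    have h2 : (∫ x in x₀..b, (M : ℝ)) = (b - x₀) * M := by simp [mul_comm]
    have h3 : (b - x₀) * M < ε := by
      have hbv' : b - x₀ < ε / M := lt_of_le_of_lt hb1 hvM
      calc (b - x₀) * M < (ε / M) * M := by
            apply mul_lt_mul_of_pos_right hbv' hMpos
        _ = ε := by field_simp
    linarith [h1, h2 ▸ h1]
  rw [hE, hE, habsb, habsnc, habsc, abs_of_pos hx₀]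
  linarith
end

section
/- Let α parametrize by arc length the circle of radius R > 0 centered at (a, 0) with a > 0, i.e. α(t) = (a + R cos(t/R), R sin(t/R)), with unit normal n(t) = (cos(t/R), sin(t/R)). Let ψ ∈ C^2 and g ∈ C^1 satisfy ψ' ≥ 0, ψ'' + g' > 0, and define H̃_1(t) = ψ'(|α(t)|) (α(t)·n(t))/|α(t)| + g(|α(t)|). Then H̃_1'(0) = 0 and H̃_1''(0) = (ψ''(|α(0)|) + g'(|α(0)|)) (1/|α(0)|)(1 - |α(0)|/R) + ψ'(|α(0)|)(1/|α(0)|)(1 - |α(0)|/R)(1/R - 1/|α(0)|) < 0, using that |α(0)| = a + R > R. -/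
open Real Filter Topology

lemma mul_contAt_hasDerivAt {u A : ℝ → ℝ} {x u' : ℝ} (hu : HasDerivAt u u' x)
    (hux : u x = 0) (hA : ContinuousAt A x) :
    HasDerivAt (fun t => u t * A t) (u' * A x) x := by
  rw [hasDerivAt_iff_tendsto_slope] at hu ⊢
  have heq : ∀ᶠ t in 𝓝[≠] x, slope (fun t => u t * A t) x t = slope u x t * A t := by
    filter_upwards [self_mem_nhdsWithin] with t ht
    simp only [slope_def_field, hux, mul_zero, sub_zero]
    ring
  rw [tendsto_congr' heq]
  exact hu.mul (hA.tendsto.mono_left nhdsWithin_le_nhds)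

noncomputable def Mfun (a R : ℝ) : ℝ → ℝ :=
  fun t => Real.sqrt (a^2 + R^2 + 2*a*R*Real.cos (t/R))

noncomputable def Afun (a R : ℝ) (ψ g : ℝ → ℝ) : ℝ → ℝ := fun t =>
  -a * (deriv (deriv ψ) (Mfun a R t) * ((a*Real.cos (t/R)+R)/(Mfun a R t)^2)
    + deriv ψ (Mfun a R t) / (R * Mfun a R t)
    - deriv ψ (Mfun a R t) * ((a*Real.cos (t/R)+R)/(Mfun a R t)^3)
    + deriv g (Mfun a R t) / Mfun a R t)

lemma key_hasDerivAt (a R : ℝ) (ha : 0 < a) (hR : 0 < R) (ψ g : ℝ → ℝ)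
    (hψd : Differentiable ℝ (deriv ψ)) (hgd : Differentiable ℝ g)
    (t : ℝ) (ht : 0 < Real.cos (t/R)) :
    HasDerivAt (fun x => deriv ψ (Mfun a R x) * ((a*Real.cos (x/R)+R)/Mfun a R x)
        + g (Mfun a R x))
      (Real.sin (t/R) * Afun a R ψ g t) t := by
  have hq : 0 < a^2 + R^2 + 2*a*R*Real.cos (t/R) := by nlinarith [mul_pos (mul_pos ha hR) ht, pow_pos ha 2, sq_nonneg R]
  have hMpos : 0 < Mfun a R t := Real.sqrt_pos.mpr hq
  have hlin : HasDerivAt (fun x : ℝ => x / R) (1/R) t := (hasDerivAt_id t).div_const R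
  have hcos : HasDerivAt (fun x => Real.cos (x/R)) (-Real.sin (t/R) * (1/R)) t :=
    by have := (Real.hasDerivAt_cos (t/R)).comp t hlin; exact this
  have hq' : HasDerivAt (fun x => a^2 + R^2 + 2*a*R*Real.cos (x/R))
      (2*a*R*(-Real.sin (t/R) * (1/R))) t := by
    have := (hcos.const_mul (2*a*R)).const_add (a^2 + R^2)
    convert this using 2
  have hM : HasDerivAt (Mfun a R)
      (1/(2*Real.sqrt (a^2 + R^2 + 2*a*R*Real.cos (t/R))) * (2*a*R*(-Real.sin (t/R) * (1/R)))) t :=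
    (Real.hasDerivAt_sqrt hq.ne').comp t hq'
  have hPM : HasDerivAt (fun x => deriv ψ (Mfun a R x))
      (deriv (deriv ψ) (Mfun a R t)
        * (1/(2*Real.sqrt (a^2 + R^2 + 2*a*R*Real.cos (t/R))) * (2*a*R*(-Real.sin (t/R) * (1/R))))) t :=
    ((hψd (Mfun a R t)).hasDerivAt).comp t hM
  have hnum : HasDerivAt (fun x => a*Real.cos (x/R) + R) (a * (-Real.sin (t/R) * (1/R))) t :=
    (hcos.const_mul a).add_const R
  have hdivv := hnum.div hM hMpos.ne'
  have hfrac := hPM.mul hdivv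
  have hgM : HasDerivAt (fun x => g (Mfun a R x))
      (deriv g (Mfun a R t)
        * (1/(2*Real.sqrt (a^2 + R^2 + 2*a*R*Real.cos (t/R))) * (2*a*R*(-Real.sin (t/R) * (1/R))))) t :=
    ((hgd (Mfun a R t)).hasDerivAt).comp t hM
  have htot := hfrac.add hgM
  refine htot.congr_deriv (Eq.symm ?_)
  have hMe : Mfun a R t = Real.sqrt (a^2 + R^2 + 2*a*R*Real.cos (t/R)) := rfl
  have hsq : (Mfun a R t)^2 = a^2 + R^2 + 2*a*R*Real.cos (t/R) := by
    rw [hMe]; exact Real.sq_sqrt hq.le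
  rw [Afun]
  rw [← hMe, Pi.div_apply]
  field_simp
  nlinarith [hsq, sq_nonneg (Mfun a R t), hMpos]

/-- Second derivative of the weighted curvature term along an off-center circle: it vanishes to
first order and is strictly negative to second order at the farthest point. Here
`α(t) = (a + R cos(t/R), R sin(t/R))`, `n(t) = (cos(t/R), sin(t/R))`, `m t = |α(t)|`,
`dotn t = α(t)·n(t)`, and `H̃₁(t) = ψ'(|α(t)|)(α(t)·n(t))/|α(t)| + g(|α(t)|)`. -/
theorem weighted_curvature_second_derivative_off_center
    (a R : ℝ) (ha : 0 < a) (hR : 0 < R)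
    (ψ g : ℝ → ℝ) (hψ : ContDiff ℝ 2 ψ) (hg : ContDiff ℝ 1 g)
    (hψ' : ∀ r : ℝ, 0 ≤ r → 0 ≤ deriv ψ r)
    (hstab : ∀ r : ℝ, 0 ≤ r → 0 < deriv (deriv ψ) r + deriv g r)
    (m dotn H₁ : ℝ → ℝ)
    (hm : ∀ t : ℝ, m t = Real.sqrt ((a + R * Real.cos (t / R)) ^ 2
      + (R * Real.sin (t / R)) ^ 2))
    (hdotn : ∀ t : ℝ, dotn t = (a + R * Real.cos (t / R)) * Real.cos (t / R)
      + (R * Real.sin (t / R)) * Real.sin (t / R))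
    (hH₁ : ∀ t : ℝ, H₁ t = deriv ψ (m t) * (dotn t / m t) + g (m t)) :
    deriv H₁ 0 = 0 ∧
    deriv (deriv H₁) 0 =
      (deriv (deriv ψ) (m 0) + deriv g (m 0)) * (1 / m 0) * (1 - m 0 / R)
        + deriv ψ (m 0) * (1 / m 0) * (1 - m 0 / R) * (1 / R - 1 / m 0) ∧
    deriv (deriv H₁) 0 < 0 := by
  have hψ1 : ContDiff ℝ 1 (deriv ψ) :=
    ((contDiff_succ_iff_deriv (n := 1)).mp (by exact_mod_cast hψ)).2.2
  have hψd : Differentiable ℝ (deriv ψ) := hψ1.differentiable one_ne_zero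
  have hgd : Differentiable ℝ g := hg.differentiable one_ne_zero
  have hψ'c : Continuous (deriv ψ) := hψd.continuous
  have hψ''c : Continuous (deriv (deriv ψ)) := hψ1.continuous_deriv le_rfl
  have hg'c : Continuous (deriv g) := hg.continuous_deriv le_rfl
  -- H₁ equals the explicit function
  have hmM : ∀ t, m t = Mfun a R t := by
    intro t
    rw [hm, Mfun]
    congr 1
    have := Real.sin_sq_add_cos_sq (t/R)
    nlinarith
  have hdotn' : ∀ t, dotn t = a * Real.cos (t/R) + R := by
    intro t
    rw [hdotn]
    have := Real.sin_sq_add_cos_sq (t/R)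
    nlinarith
  have hfun : H₁ = fun t => deriv ψ (Mfun a R t) * ((a*Real.cos (t/R)+R)/Mfun a R t)
      + g (Mfun a R t) := by
    funext t; rw [hH₁, hmM, hdotn']
  -- key derivative formula on the open set {cos (t/R) > 0}
  have hkey : ∀ t, 0 < Real.cos (t/R) →
      HasDerivAt H₁ (Real.sin (t/R) * Afun a R ψ g t) t := by
    intro t ht
    rw [hfun]
    exact key_hasDerivAt a R ha hR ψ g hψd hgd t ht
  have h0mem : (0:ℝ) ∈ {t : ℝ | 0 < Real.cos (t/R)} := by
    simp only [Set.mem_setOf_eq, zero_div, Real.cos_zero]; norm_num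
  have hU : IsOpen {t : ℝ | 0 < Real.cos (t/R)} :=
    isOpen_lt continuous_const (by continuity)
  have hEq : deriv H₁ =ᶠ[𝓝 (0:ℝ)] fun t => Real.sin (t/R) * Afun a R ψ g t := by
    filter_upwards [hU.mem_nhds h0mem] with t ht using (hkey t ht).deriv
  -- values at 0
  have hM0 : Mfun a R 0 = a + R := by
    rw [Mfun]
    simp only [zero_div, Real.cos_zero, mul_one]
    rw [show a^2 + R^2 + 2*a*R = (a+R)^2 by ring, Real.sqrt_sq (by positivity)]
  have hm0 : m 0 = a + R := by rw [hmM, hM0]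
  have haR : (0:ℝ) < a + R := by linarith
  -- continuity of A at 0
  have hMc : Continuous (Mfun a R) := by
    unfold Mfun
    exact Real.continuous_sqrt.comp (by fun_prop)
  have hA : ContinuousAt (Afun a R ψ g) 0 := by
    unfold Afun
    have h1 : ContinuousAt (fun t => deriv (deriv ψ) (Mfun a R t)) 0 :=
      hψ''c.continuousAt.comp hMc.continuousAt
    have h2 : ContinuousAt (fun t => deriv ψ (Mfun a R t)) 0 :=
      hψ'c.continuousAt.comp hMc.continuousAt
    have h3 : ContinuousAt (fun t => deriv g (Mfun a R t)) 0 :=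
      hg'c.continuousAt.comp hMc.continuousAt
    have hc : ContinuousAt (fun t : ℝ => a * Real.cos (t/R) + R) 0 := by fun_prop
    refine continuousAt_const.mul ?_
    refine (((h1.mul (hc.div ((hMc.continuousAt).pow 2)
        (by show Mfun a R 0 ^ 2 ≠ 0; rw [hM0]; positivity))).add
      (h2.div ((continuousAt_const.mul hMc.continuousAt))
        (by show R * Mfun a R 0 ≠ 0; simp only [hM0]; positivity))).sub
      (h2.mul (hc.div ((hMc.continuousAt).pow 3)
        (by show Mfun a R 0 ^ 3 ≠ 0; rw [hM0]; positivity)))).add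
      (h3.div hMc.continuousAt (by rw [hM0]; positivity))
  -- first derivative at 0 vanishes
  have hd1 : deriv H₁ 0 = 0 := by
    rw [(hkey 0 h0mem).deriv]
    simp
  -- second derivative
  have hsin : HasDerivAt (fun t : ℝ => Real.sin (t/R)) (Real.cos ((0:ℝ)/R) * (1/R)) 0 :=
    (Real.hasDerivAt_sin ((0:ℝ)/R)).comp 0 ((hasDerivAt_id 0).div_const R)
  have hD : HasDerivAt (fun t => Real.sin (t/R) * Afun a R ψ g t)
      ((Real.cos ((0:ℝ)/R) * (1/R)) * Afun a R ψ g 0) 0 :=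
    mul_contAt_hasDerivAt hsin (by simp) hA
  have hd2 : deriv (deriv H₁) 0 = (1/R) * Afun a R ψ g 0 := by
    rw [hEq.deriv_eq, hD.deriv]
    simp
  have hA0 : Afun a R ψ g 0 = -a * (deriv (deriv ψ) (a+R) * ((a+R)/(a+R)^2)
      + deriv ψ (a+R) / (R * (a+R)) - deriv ψ (a+R) * ((a+R)/(a+R)^3)
      + deriv g (a+R) / (a+R)) := by
    rw [Afun, hM0]
    simp only [zero_div, Real.cos_zero, mul_one]
  set S := deriv (deriv ψ) (a+R) + deriv g (a+R) with hS_def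
  set P := deriv ψ (a+R) with hP_def
  have hS : 0 < S := hstab (a+R) haR.le
  have hP : 0 ≤ P := hψ' (a+R) haR.le
  have hval : deriv (deriv H₁) 0 = -(S * (a/(R*(a+R))) + P * (a^2/((R*(a+R))^2))) := by
    rw [hd2, hA0, hS_def, hP_def]
    field_simp
    ring
  refine ⟨hd1, ?_, ?_⟩
  · rw [hval, hm0]
    field_simp
    ring
  · rw [hval]
    have hpos : 0 < S * (a/(R*(a+R))) + P * (a^2/((R*(a+R))^2)) :=
      add_pos_of_pos_of_nonneg (mul_pos hS (by positivity)) (mul_nonneg hP (by positivity))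
    linarith
end

section
/- Let α(t) = (a + r cos(t/r), r sin(t/r)) parametrize a circle of radius r centered at (a, 0), n(t) = (cos(t/r), sin(t/r)), and let θ(t) ∈ (π/2, π) be the angle between α(t) and α'(t) at some time t with |α(t)| ≥ r. Then d/dt [sin θ(t)] = cos θ(t) (1/r - sin θ(t)/|α(t)|) ≤ 0. -/
open Real Set

/-- Monotonicity of the sine of the angle between the position vector and the tangent along a
circle: `d/dt sin θ = cos θ (1/r - sin θ / |α|) ≤ 0` when `θ ∈ (π/2, π)` and `|α| ≥ r`. Here
`α(t) = (a + r cos(t/r), r sin(t/r))`, `m t = |α(t)|`, `sin θ = α·n/|α|`, `cos θ = α·α'/|α|`. -/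
theorem sin_angle_decreasing_along_circle
    (a r : ℝ) (hr : 0 < r)
    (m : ℝ → ℝ)
    (hm : ∀ t : ℝ, m t = Real.sqrt ((a + r * Real.cos (t / r)) ^ 2
      + (r * Real.sin (t / r)) ^ 2))
    (θ : ℝ → ℝ) (hθdiff : Differentiable ℝ θ)
    (hsin : ∀ t : ℝ, Real.sin (θ t) =
      ((a + r * Real.cos (t / r)) * Real.cos (t / r)
        + (r * Real.sin (t / r)) * Real.sin (t / r)) / m t)
    (hcos : ∀ t : ℝ, Real.cos (θ t) =
      ((a + r * Real.cos (t / r)) * (-Real.sin (t / r))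
        + (r * Real.sin (t / r)) * Real.cos (t / r)) / m t)
    (t₀ : ℝ) (hθ₀ : θ t₀ ∈ Ioo (π / 2) π) (hm₀ : r ≤ m t₀) :
    deriv (fun t => Real.sin (θ t)) t₀ =
      Real.cos (θ t₀) * (1 / r - Real.sin (θ t₀) / m t₀) ∧
    deriv (fun t => Real.sin (θ t)) t₀ ≤ 0 := by
  set c := Real.cos (t₀ / r) with hc
  set s := Real.sin (t₀ / r) with hs
  -- rewrite m as sqrt of the simplified square
  have hmeq : ∀ t : ℝ, m t = Real.sqrt (a ^ 2 + 2 * a * r * Real.cos (t / r) + r ^ 2) := by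
    intro t
    rw [hm t]
    congr 1
    nlinarith [Real.sin_sq_add_cos_sq (t / r)]
  set M := m t₀ with hM
  have hMpos : 0 < M := lt_of_lt_of_le hr hm₀
  have hMne : M ≠ 0 := ne_of_gt hMpos
  have hgpos : 0 < a ^ 2 + 2 * a * r * c + r ^ 2 := by
    have h := hmeq t₀
    rw [← hM, ← hc] at h
    rw [← Real.sqrt_pos, ← h]
    exact hMpos
  have hgne : a ^ 2 + 2 * a * r * c + r ^ 2 ≠ 0 := ne_of_gt hgpos
  have hMsqrt : M = Real.sqrt (a ^ 2 + 2 * a * r * c + r ^ 2) := by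
    have h := hmeq t₀; rw [← hM, ← hc] at h; exact h
  have hMsq : M ^ 2 = a ^ 2 + 2 * a * r * c + r ^ 2 := by
    rw [hMsqrt]; exact Real.sq_sqrt hgpos.le
  -- simplified sin and cos of θ t₀
  have hsinv : Real.sin (θ t₀) = (a * c + r) / M := by
    rw [hsin t₀, ← hM, ← hc, ← hs]
    congr 1
    nlinarith [Real.sin_sq_add_cos_sq (t₀ / r)]
  have hcosv : Real.cos (θ t₀) = (-(a * s)) / M := by
    rw [hcos t₀, ← hM, ← hc, ← hs]
    congr 1
    ring
  -- the function sin ∘ θ equals an explicit function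
  have key : (fun t => Real.sin (θ t))
      = fun t => (a * Real.cos (t / r) + r)
          / Real.sqrt (a ^ 2 + 2 * a * r * Real.cos (t / r) + r ^ 2) := by
    funext t
    rw [hsin t, hmeq t]
    congr 1
    nlinarith [Real.sin_sq_add_cos_sq (t / r)]
  -- derivative computation
  have hdiv : HasDerivAt (fun t : ℝ => t / r) (1 / r) t₀ := by
    simpa using (hasDerivAt_id t₀).div_const r
  have hcos' : HasDerivAt (fun t : ℝ => Real.cos (t / r)) (-s * (1 / r)) t₀ :=
    by have := (Real.hasDerivAt_cos (t₀ / r)).comp t₀ hdiv; exact this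
  have hN : HasDerivAt (fun t : ℝ => a * Real.cos (t / r) + r)
      (a * (-s * (1 / r))) t₀ := (hcos'.const_mul a).add_const r
  have hg : HasDerivAt (fun t : ℝ => a ^ 2 + 2 * a * r * Real.cos (t / r) + r ^ 2)
      (2 * a * r * (-s * (1 / r))) t₀ :=
    ((hcos'.const_mul (2 * a * r)).const_add (a ^ 2)).add_const (r ^ 2)
  have hsq : HasDerivAt
      (fun t : ℝ => Real.sqrt (a ^ 2 + 2 * a * r * Real.cos (t / r) + r ^ 2))
      (2 * a * r * (-s * (1 / r)) / (2 * Real.sqrt (a ^ 2 + 2 * a * r * c + r ^ 2))) t₀ :=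
    hg.sqrt hgne
  have hsqne : Real.sqrt (a ^ 2 + 2 * a * r * c + r ^ 2) ≠ 0 := by
    rw [← hMsqrt]; exact hMne
  have hD : HasDerivAt (fun t => (a * Real.cos (t / r) + r)
      / Real.sqrt (a ^ 2 + 2 * a * r * Real.cos (t / r) + r ^ 2))
      ((a * (-s * (1 / r)) * Real.sqrt (a ^ 2 + 2 * a * r * c + r ^ 2)
        - (a * c + r) * (2 * a * r * (-s * (1 / r))
          / (2 * Real.sqrt (a ^ 2 + 2 * a * r * c + r ^ 2))))
        / (Real.sqrt (a ^ 2 + 2 * a * r * c + r ^ 2)) ^ 2) t₀ :=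
    hN.div hsq hsqne
  have hderiv : deriv (fun t => Real.sin (θ t)) t₀
      = (a * (-s * (1 / r)) * M - (a * c + r) * (2 * a * r * (-s * (1 / r)) / (2 * M)))
        / M ^ 2 := by
    rw [key, hD.deriv, ← hMsqrt]
  have heq : deriv (fun t => Real.sin (θ t)) t₀
      = Real.cos (θ t₀) * (1 / r - Real.sin (θ t₀) / M) := by
    rw [hderiv, hcosv, hsinv]
    field_simp
    ring
  refine ⟨heq, ?_⟩
  rw [heq]
  have hcosle : Real.cos (θ t₀) ≤ 0 :=
    Real.cos_nonpos_of_pi_div_two_le_of_le hθ₀.1.le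
      (by linarith [hθ₀.2, Real.pi_pos])
  have hfac : 0 ≤ 1 / r - Real.sin (θ t₀) / M := by
    have h1 : Real.sin (θ t₀) / M ≤ 1 / M := by
      gcongr
      exact Real.sin_le_one _
    have h2 : 1 / M ≤ 1 / r := one_div_le_one_div_of_le hr hm₀
    linarith
  exact mul_nonpos_iff.mpr (Or.inr ⟨hcosle, hfac⟩)
end
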